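/- For every real t ≠ 0: ξ_0(z(t)) = sqrt(2f(f+1))·φ_0(t) + sqrt(2f/(1+f)), and for every integer b ≥ 1, ξ_b(z(t)) = (-1)^b · sqrt(2f(f+1)) · φ_b(t), where φ_b(t) denotes the evaluation of the polynomial φ_b at t. (This identifies Eynard's formula for the correlation functions of the mirror curve of ℂ³ with the Chen–Zhou formula.) -/

import Mathlib

open Polynomial

/-- Auxiliary polynomials: `ψ b` such that `ξ b w = ψ b ((f+1)w - f)⁻¹`. -/
noncomputable def eynardPsiAux (A B : ℝ) (φ : ℕ → Polynomial ℝ) (b : ℕ) : Polynomial ℝ :=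
  C ((-1:ℝ)^b * A) * φ b + (if b = 0 then C B else 0)

set_option maxHeartbeats 1000000 in
/-- Identification of Eynard's `ξ_b` (the `b`-th `x`-derivative of `ξ_0`) with the
Chen–Zhou polynomials `φ_b`: for real `t ≠ 0`,
`ξ_0(z(t)) = √(2f(f+1)) φ_0(t) + √(2f/(1+f))` and, for `b ≥ 1`,
`ξ_b(z(t)) = (-1)^b √(2f(f+1)) φ_b(t)`. -/
theorem eynard_xi_eq_chen_zhou_phi (f : ℝ) (hf : 0 < f)
    (D : Polynomial ℝ → Polynomial ℝ)
    (hD : ∀ p, D p = C ((f + 1)⁻¹) * (X * (X - 1) * (C f * X + 1)) * p.derivative)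
    (φ : ℕ → Polynomial ℝ)
    (hφ0 : φ 0 = C ((f + 1)⁻¹) * (X - 1))
    (hφ : ∀ b, φ (b + 1) = D (φ b))
    (z : ℝ → ℝ) (hz : ∀ t : ℝ, t ≠ 0 → z t = (1 / (f + 1)) * (f + 1 / t))
    (ξ : ℕ → ℝ → ℝ)
    (hξ0 : ∀ w : ℝ, ξ 0 w = Real.sqrt (2 * f / (1 + f) ^ 3) / (w - f / (f + 1)))
    (hξ : ∀ b : ℕ, ∀ w : ℝ,
      ξ (b + 1) w = (w * (1 - w) / ((f + 1) * w - f)) * deriv (ξ b) w) :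
    ∀ t : ℝ, t ≠ 0 →
      ξ 0 (z t) = Real.sqrt (2 * f * (f + 1)) * (φ 0).eval t + Real.sqrt (2 * f / (1 + f)) ∧
      ∀ b : ℕ, 1 ≤ b →
        ξ b (z t) = (-1 : ℝ) ^ b * Real.sqrt (2 * f * (f + 1)) * (φ b).eval t := by
  have hf1 : (0:ℝ) < f + 1 := by linarith
  have hf1' : (f:ℝ) + 1 ≠ 0 := ne_of_gt hf1
  set A := Real.sqrt (2 * f * (f + 1)) with hA
  set B := Real.sqrt (2 * f / (1 + f)) with hB
  have hAB : A = B * (f + 1) := by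
    rw [hA, hB, ← Real.sqrt_sq hf1.le, ← Real.sqrt_mul (by positivity)]
    congr 1
    rw [Real.sqrt_sq hf1.le]
    field_simp
    ring
  have hC : Real.sqrt (2 * f / (1 + f) ^ 3) = B / (f + 1) := by
    rw [hB, eq_div_iff hf1', ← Real.sqrt_sq hf1.le, ← Real.sqrt_mul (by positivity)]
    congr 1
    field_simp
    ring
  set ψ : ℕ → Polynomial ℝ := eynardPsiAux A B φ with hψ
  have hψ0 : ψ 0 = C A * φ 0 + C B := by
    simp [hψ, eynardPsiAux]
  have hψs : ∀ b : ℕ, ψ (b + 1) = C ((-1:ℝ)^(b+1) * A) * φ (b + 1) := by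
    intro b; simp [hψ, eynardPsiAux]
  have hderψ : ∀ b : ℕ, (ψ b).derivative = C ((-1:ℝ)^b * A) * (φ b).derivative := by
    intro b
    rcases b with _ | b
    · rw [hψ0, derivative_add, derivative_C_mul, derivative_C, add_zero, pow_zero, one_mul]
    · rw [hψs, derivative_C_mul]
  have key : ∀ b : ℕ, ∀ w : ℝ, (f+1)*w - f ≠ 0 →
      ξ b w = (ψ b).eval (((f+1)*w - f)⁻¹) := by
    intro b
    induction b with
    | zero =>
      intro w hw
      rw [hξ0, hψ0]
      simp only [eval_add, eval_mul, eval_C, hφ0, eval_sub, eval_X, eval_one]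
      rw [hC, hAB]
      have hw' : -f + (f*w + w) ≠ 0 := by intro h; exact hw (by linarith)
      have e1 : w - f / (f + 1) = ((f+1)*w - f) / (f + 1) := by field_simp
      rw [e1]
      field_simp
      ring
    | succ b ih =>
      intro w hw
      set s := ((f+1)*w - f)⁻¹ with hs
      have h1 : HasDerivAt (fun x : ℝ => (f+1)*x - f) (f+1) w := by
        simpa using ((hasDerivAt_id w).const_mul (f+1)).sub_const f
      have h2 : HasDerivAt (fun x : ℝ => ((f+1)*x - f)⁻¹) (-(f+1) / ((f+1)*w - f)^2) w := h1.inv hw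
      have hdiff : HasDerivAt (fun x : ℝ => (ψ b).eval (((f+1)*x - f)⁻¹))
          ((ψ b).derivative.eval s * (-(f+1) / ((f+1)*w - f)^2)) w :=
        by have := ((ψ b).hasDerivAt s).comp w h2; exact this
      have hev : ξ b =ᶠ[nhds w] fun x => (ψ b).eval (((f+1)*x - f)⁻¹) := by
        have hcont : Continuous fun x : ℝ => (f+1)*x - f :=
          (continuous_const.mul continuous_id).sub continuous_const
        have hopen : IsOpen {x : ℝ | (f+1)*x - f ≠ 0} := isOpen_ne.preimage hcont
        filter_upwards [hopen.mem_nhds hw] with x hx using ih x hx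
      have hder : deriv (ξ b) w = (ψ b).derivative.eval s * (-(f+1) / ((f+1)*w - f)^2) := by
        rw [hev.deriv_eq, hdiff.deriv]
      have hev2 : (ψ (b+1)).eval s
          = (-1:ℝ)^(b+1) * A * ((f+1)⁻¹ * (s * (s-1) * (f*s+1)) * (φ b).derivative.eval s) := by
        rw [hψs, hφ, hD]
        simp only [eval_mul, eval_C, eval_X, eval_sub, eval_one, eval_add]
      rw [hξ, hder, hderψ, hev2]
      simp only [eval_mul, eval_C]
      have hw' : -f + (f*w + w) ≠ 0 := by intro h; exact hw (by linarith)
      have hs' : s = (-f + (f*w + w))⁻¹ := by rw [hs]; ring_nf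
      rw [hs']
      generalize (φ b).derivative.eval (-f + (f*w + w))⁻¹ = E
      have h3 : w * (f + 1) - f ≠ 0 := by intro h; exact hw (by linarith)
      have h4 : -f + w * (f + 1) ≠ 0 := by intro h; exact hw (by linarith)
      field_simp
      ring
  intro t ht
  have hu : (f+1) * z t - f = t⁻¹ := by
    rw [hz t ht]
    field_simp
    ring
  have hu' : (f+1) * z t - f ≠ 0 := by rw [hu]; exact inv_ne_zero ht
  constructor
  · have h := key 0 (z t) hu'
    rw [h, hu, inv_inv, hψ0]
    simp
  · intro b hb
    obtain ⟨b, rfl⟩ : ∃ c, b = c + 1 := ⟨b - 1, (Nat.succ_pred_eq_of_pos hb).symm⟩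
    have h := key (b+1) (z t) hu'
    rw [h, hu, inv_inv, hψs]
    simp [mul_assoc]
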